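/- arXiv:2012.08749 — 2 statements merged into one kernel-verified Lean document; each statement's English description precedes it below -/
import Mathlib

section
/- Let μ be a probability measure on ℝ_{>0}×ℝ with coordinates (Λ,B), with Λ supported in [Σ_min,Σ_max] ⊂ (0,∞) and E[B²Λ] < ∞, let σ > 0 and κ > 1. Consider the concave-convex function D(u,τ) = (1/2)( uτ + uσ²/τ − u²κ E_μ[1/(Λ^{-1} + u/τ)] − E_μ[B²Λ^{-1}/(Λ^{-1} + u/τ)] ) on u ≥ 0, τ > 0. Then the max-min problem max_{u≥0} min_{τ>0} D(u,τ) has a unique saddle point (u*, τ*) which satisfies: u*/τ* = ξ, where ξ > 0 is the unique positive solution of E_μ[1/((ξΛ)^{-1}+1)] = 1/κ, and τ*² = (σ² + E_μ[B²Λ^{-1}/(Λ^{-1}+ξ)²]) / (1 − κ E_μ[1/((ξΛ)^{-1}+1)²]) = γ. -/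
open MeasureTheory ProbabilityTheory Filter Finset Matrix

noncomputable section

/-- Euclidean norm of a pair of reals. -/
def en2 (v : ℝ × ℝ) : ℝ := Real.sqrt (v.1 ^ 2 + v.2 ^ 2)

/-- Euclidean norm of a triple of reals. -/
def en3 (v : ℝ × ℝ × ℝ) : ℝ := Real.sqrt (v.1 ^ 2 + v.2.1 ^ 2 + v.2.2 ^ 2)

/-- `f : ℝ² → ℝ` is pseudo-Lipschitz of order `k`. -/
def PL2 (k : ℕ) (f : ℝ × ℝ → ℝ) : Prop :=
  ∃ L > 0, ∀ x y : ℝ × ℝ,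
    |f x - f y| ≤ L * (1 + en2 x ^ (k - 1) + en2 y ^ (k - 1)) * en2 (x.1 - y.1, x.2 - y.2)

/-- `f : ℝ³ → ℝ` is pseudo-Lipschitz of order `k`. -/
def PL3 (k : ℕ) (f : ℝ × ℝ × ℝ → ℝ) : Prop :=
  ∃ L > 0, ∀ x y : ℝ × ℝ × ℝ,
    |f x - f y| ≤ L * (1 + en3 x ^ (k - 1) + en3 y ^ (k - 1)) *
      en3 (x.1 - y.1, x.2.1 - y.2.1, x.2.2 - y.2.2)

/-- `g : ℝ² → ℝ` is pseudo-Lipschitz of order 2 with constant at most `C`. -/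
def PL2ConstLE (C : ℝ) (g : ℝ × ℝ → ℝ) : Prop :=
  ∀ x y : ℝ × ℝ, |g x - g y| ≤ C * (1 + en2 x + en2 y) * en2 (x.1 - y.1, x.2 - y.2)

/-- The class `F` of test functions: `PL(3)` on `ℝ³`, with uniformly bounded `PL(2)`
constants of the slices `f(·,·,z)` for `z` in `[Smin, Smax]`. -/
def MemClassF (Smin Smax : ℝ) (f : ℝ × ℝ × ℝ → ℝ) : Prop :=
  PL3 3 f ∧ ∃ C > 0, ∀ z ∈ Set.Icc Smin Smax, PL2ConstLE C fun x => f (x.1, x.2, z)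

/-- The limiting random variable `X_{κ,σ²}(Λ,B,H)` as a function of `((Λ,B),H)`. -/
def Xlim (κ ξ γ : ℝ) (q : (ℝ × ℝ) × ℝ) : ℝ :=
  (1 - (1 + ξ * q.1.1)⁻¹) * q.1.2 +
    Real.sqrt κ * (Real.sqrt γ * (Real.sqrt q.1.1)⁻¹ / (1 + (ξ * q.1.1)⁻¹)) * q.2


/-! ### Auxiliary elementary lemmas for the saddle-point theorem -/

lemma sp_int_bdd {μ : Measure (ℝ × ℝ)} [IsProbabilityMeasure μ] {f : ℝ × ℝ → ℝ}
    (hm : AEStronglyMeasurable f μ) {C : ℝ} (h : ∀ᵐ x ∂μ, |f x| ≤ C) : Integrable f μ :=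
  (integrable_const C).mono' hm (by simpa [Real.norm_eq_abs] using h)

lemma sp_int_dom {μ : Measure (ℝ × ℝ)} [IsProbabilityMeasure μ]
    (hBL : Integrable (fun x : ℝ × ℝ => x.2 ^ 2 * x.1) μ) {f : ℝ × ℝ → ℝ}
    (hm : AEStronglyMeasurable f μ) (C₁ C₂ : ℝ)
    (h : ∀ᵐ x ∂μ, |f x| ≤ C₁ + C₂ * (x.2 ^ 2 * x.1)) : Integrable f μ :=
  ((integrable_const C₁).add (hBL.const_mul C₂)).mono' hm (by simpa [Real.norm_eq_abs] using h)

lemma sp_f_eq {s l : ℝ} (hs : 0 < s) (hl : 0 < l) :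
    (1 + (s * l)⁻¹)⁻¹ = s * l / (1 + s * l) := by
  rw [show (1 + (s*l)⁻¹) = (1+s*l)/(s*l) by field_simp; ring]
  rw [one_div ((1+s*l)/(s*l)) |>.symm, one_div_div]

lemma sp_f_eq' {s l : ℝ} (hs : 0 < s) (hl : 0 < l) :
    ((s * l)⁻¹ + 1)⁻¹ = s * l / (1 + s * l) := by
  rw [add_comm, sp_f_eq hs hl]

lemma sp_id1 {s l : ℝ} (hs : 0 < s) (hl : 0 < l) :
    (1 + (s * l)⁻¹)⁻¹ = 1 - (1 + s * l)⁻¹ := by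
  rw [sp_f_eq hs hl]; field_simp; ring

lemma sp_id2 {s l : ℝ} (hs : 0 < s) (hl : 0 < l) :
    (((s * l)⁻¹ + 1)⁻¹) ^ 2 = 1 - 2 * (1 + s * l)⁻¹ + ((1 + s * l)⁻¹) ^ 2 := by
  rw [sp_f_eq' hs hl]
  have h : (0:ℝ) < 1 + s*l := by positivity
  field_simp
  ring

lemma sp_id3 {s l b : ℝ} (hs : 0 < s) (hl : 0 < l) :
    b ^ 2 * l⁻¹ / (l⁻¹ + s) ^ 2 = b ^ 2 * l / (1 + s * l) ^ 2 := by
  rw [show l⁻¹ + s = (1+s*l)/l by field_simp]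
  have h : (0:ℝ) < 1 + s*l := by positivity
  field_simp

lemma sp_id4 {κ u τ l b : ℝ} (hκ : 0 < κ) (hu : 0 ≤ u) (hτ : 0 < τ) (hl : 0 < l) :
    κ * u ^ 2 * (l⁻¹ + u / τ)⁻¹ + b ^ 2 * l⁻¹ / (l⁻¹ + u / τ)
      = (κ * u ^ 2 * l + b ^ 2) * τ / (τ + u * l) := by
  have h1 : (0:ℝ) < τ + u * l := by positivity
  rw [show l⁻¹ + u/τ = (τ + u*l)/(l*τ) by field_simp]
  field_simp

lemma sp_id5 {s l Smax : ℝ} (hs : 0 < s) (hl : 0 < l) (hl2 : l ≤ Smax) :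
    (((s * l)⁻¹ + 1)⁻¹) ^ 2 ≤ (s * Smax / (1 + s * Smax)) * (1 + (s * l)⁻¹)⁻¹ := by
  have hSmax : 0 < Smax := lt_of_lt_of_le hl hl2
  rw [sp_f_eq' hs hl, sp_f_eq hs hl]
  have h1 : (0:ℝ) < 1 + s*l := by positivity
  have h2 : (0:ℝ) < 1 + s*Smax := by positivity
  rw [div_pow, div_mul_div_comm, div_le_div_iff₀ (by positivity) (by positivity)]
  nlinarith [mul_nonneg (mul_nonneg (mul_nonneg (mul_pos hs hl).le h1.le) hs.le) (sub_nonneg.2 hl2)]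

lemma sp_pb1 {ξ l : ℝ} (hξ : 0 < ξ) (hl : 0 < l) :
    0 ≤ (1 + (ξ * l)⁻¹)⁻¹ ∧ (1 + (ξ * l)⁻¹)⁻¹ ≤ 1 := by
  have h0 : (0:ℝ) < ξ * l := by positivity
  constructor
  · positivity
  · rw [inv_le_one_iff₀]; right; nlinarith [inv_pos.2 h0]

lemma sp_pb2 {ξ l Smax : ℝ} (hξ : 0 < ξ) (hl : 0 < l) (hl2 : l ≤ Smax) :
    (1 + (ξ * l)⁻¹)⁻¹ ≤ ξ * Smax := by
  have h0 : (0:ℝ) < ξ * l := by positivity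
  have h : (1 + (ξ*l)⁻¹)⁻¹ ≤ ((ξ*l)⁻¹)⁻¹ := by
    apply inv_anti₀ (by positivity)
    nlinarith [inv_pos.2 h0]
  rw [inv_inv] at h
  nlinarith

lemma sp_pb3 {ξ l Smin : ℝ} (hξ : 0 < ξ) (hSmin : 0 < Smin) (hl1 : Smin ≤ l) :
    1 - (1 + ξ * Smin)⁻¹ ≤ (1 + (ξ * l)⁻¹)⁻¹ := by
  have hl : 0 < l := lt_of_lt_of_le hSmin hl1
  have h1 : (0:ℝ) < 1 + ξ*Smin := by positivity
  have h2 : (0:ℝ) < 1 + ξ*l := by positivity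
  have he : (1 + (ξ*l)⁻¹)⁻¹ = 1 - (1+ξ*l)⁻¹ := by
    rw [show (1 + (ξ*l)⁻¹) = (1+ξ*l)/(ξ*l) by field_simp; ring]
    field_simp; ring
  rw [he]
  have h3 : (1+ξ*l)⁻¹ ≤ (1+ξ*Smin)⁻¹ := by
    apply inv_anti₀ h1; nlinarith
  linarith

lemma sp_pb4 {a b l Smin Smax : ℝ} (ha : 0 < a) (hab : a ≤ b) (hSmin : 0 < Smin)
    (hl1 : Smin ≤ l) (hl2 : l ≤ Smax) :
    (b - a) * Smin / (1 + b * Smax) ^ 2 ≤ (1 + (b * l)⁻¹)⁻¹ - (1 + (a * l)⁻¹)⁻¹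
      ∧ (1 + (b * l)⁻¹)⁻¹ - (1 + (a * l)⁻¹)⁻¹ ≤ (b - a) * Smax := by
  have hl : 0 < l := lt_of_lt_of_le hSmin hl1
  have hSmax : 0 < Smax := lt_of_lt_of_le hl hl2
  have hb : 0 < b := lt_of_lt_of_le ha hab
  have h1 : (0:ℝ) < 1 + a*l := by positivity
  have h2 : (0:ℝ) < 1 + b*l := by positivity
  have h3 : (0:ℝ) < 1 + b*Smax := by positivity
  have key : (1 + (b*l)⁻¹)⁻¹ - (1 + (a*l)⁻¹)⁻¹ = (b-a)*l/((1+a*l)*(1+b*l)) := by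
    rw [show (1 + (b*l)⁻¹) = (1+b*l)/(b*l) by field_simp; ring,
        show (1 + (a*l)⁻¹) = (1+a*l)/(a*l) by field_simp; ring]
    field_simp
    ring
  rw [key]
  constructor
  · rw [div_le_div_iff₀ (by positivity) (by positivity)]
    have hal : a*l ≤ b*Smax := mul_le_mul hab hl2 hl.le hb.le
    have hbl : b*l ≤ b*Smax := mul_le_mul le_rfl hl2 hl.le hb.le
    have e1 : (1+a*l)*(1+b*l) ≤ (1+b*Smax)^2 := by
      nlinarith [mul_le_mul hal hbl (by positivity : (0:ℝ) ≤ b*l) (by positivity : (0:ℝ) ≤ b*Smax)]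
    nlinarith [mul_nonneg (sub_nonneg.2 hab) hSmin.le,
      mul_nonneg (mul_nonneg (sub_nonneg.2 hab) hSmin.le) (sub_nonneg.2 e1),
      mul_nonneg (mul_nonneg (sub_nonneg.2 hab) (sub_nonneg.2 hl1)) (sq_nonneg (1+b*Smax))]
  · rw [div_le_iff₀ (by positivity)]
    have e3 : (1:ℝ) ≤ (1+a*l)*(1+b*l) := by
      nlinarith [mul_nonneg (mul_nonneg ha.le hl.le) (mul_nonneg hb.le hl.le), mul_pos ha hl, mul_pos hb hl]
    nlinarith [mul_nonneg (mul_nonneg (sub_nonneg.2 hab) hSmax.le) (sub_nonneg.2 e3),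
      mul_nonneg (sub_nonneg.2 hab) (sub_nonneg.2 hl2)]

lemma sp_keyu {κ t l b s u Smin Smax : ℝ} (hκ : 0 < κ) (ht : 0 < t) (hs : 0 < s) (hu : 0 ≤ u)
    (hSmin : 0 < Smin) (hl1 : Smin ≤ l) (hl2 : l ≤ Smax) :
    (κ*(s*t)^2*l+b^2)*t/(t+s*t*l)
      + (u-s*t)*(κ*t*(1-((1+s*l)⁻¹)^2) - b^2*l/(1+s*l)^2/t)
      + κ*t^3*Smin/((t+u*Smax)*(t+s*t*Smax)^2)*(u-s*t)^2
      ≤ (κ*u^2*l+b^2)*t/(t+u*l) := by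
  have hl : 0 < l := lt_of_lt_of_le hSmin hl1
  have hSmax : 0 < Smax := lt_of_lt_of_le hl hl2
  have h1 : 0 < t + u*l := by positivity
  have h2 : 0 < t + s*t*l := by positivity
  have h3 : (0:ℝ) < 1 + s*l := by positivity
  have hid : (κ*u^2*l+b^2)*t/(t+u*l) - (κ*(s*t)^2*l+b^2)*t/(t+s*t*l)
      - (u-s*t)*(κ*t*(1-((1+s*l)⁻¹)^2) - b^2*l/(1+s*l)^2/t)
      = t*l*(u-s*t)^2*(κ*t^2+l*b^2)/((t+u*l)*(t+s*t*l)^2) := by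
    field_simp
    ring
  have hlb : κ*t^3*Smin/((t+u*Smax)*(t+s*t*Smax)^2)*(u-s*t)^2
      ≤ t*l*(u-s*t)^2*(κ*t^2+l*b^2)/((t+u*l)*(t+s*t*l)^2) := by
    rw [div_mul_eq_mul_div, div_le_div_iff₀ (by positivity) (by positivity)]
    have hd : (t+u*l)*(t+s*t*l)^2 ≤ (t+u*Smax)*(t+s*t*Smax)^2 := by gcongr <;> nlinarith
    have hn : κ*t^3*Smin*(u-s*t)^2 ≤ t*l*(u-s*t)^2*(κ*t^2+l*b^2) := by
      nlinarith [mul_nonneg (mul_nonneg (mul_pos hκ (pow_pos ht 3)).le (sq_nonneg (u-s*t))) (sub_nonneg.2 hl1),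
        mul_nonneg (mul_nonneg ht.le (mul_nonneg (sq_nonneg l) (sq_nonneg b))) (sq_nonneg (u-s*t))]
    calc κ*t^3*Smin*(u-s*t)^2*((t+u*l)*(t+s*t*l)^2)
        ≤ (t*l*(u-s*t)^2*(κ*t^2+l*b^2))*((t+u*Smax)*(t+s*t*Smax)^2) :=
          mul_le_mul hn hd (by positivity) (by positivity)
      _ = t*l*(u-s*t)^2*(κ*t^2+l*b^2)*((t+u*Smax)*(t+s*t*Smax)^2) := by ring
  linarith [hid, hlb]

lemma sp_keyt {κ t l b s τ : ℝ} (hκ : 0 < κ) (ht : 0 < t) (hs : 0 < s) (hτ : 0 < τ)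
    (hl : 0 < l) :
    (κ*(s*t)^2*l+b^2)*τ/(τ+s*t*l)
      ≤ (κ*(s*t)^2*l+b^2)*t/(t+s*t*l)
        + (τ-t)*((s*t)*(κ*((((s*l))⁻¹+1)⁻¹)^2 + b^2*l/(1+s*l)^2/t^2)) := by
  have h2 : 0 < t + s*t*l := by positivity
  have h3 : 0 < τ + s*t*l := by positivity
  have h4 : (0:ℝ) < 1 + s*l := by positivity
  have hd : (s*t)*(κ*((((s*l))⁻¹+1)⁻¹)^2 + b^2*l/(1+s*l)^2/t^2)
      = (κ*(s*t)^2*l+b^2)*(s*t*l)/(t+s*t*l)^2 := by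
    rw [show ((s*l))⁻¹+1 = (1+s*l)/(s*l) by field_simp]
    field_simp
  rw [hd]
  have key : (κ*(s*t)^2*l+b^2)*t/(t+s*t*l) + (τ-t)*((κ*(s*t)^2*l+b^2)*(s*t*l)/(t+s*t*l)^2)
      - (κ*(s*t)^2*l+b^2)*τ/(τ+s*t*l)
      = (κ*(s*t)^2*l+b^2)*(s*t*l)*(τ-t)^2/((t+s*t*l)^2*(τ+s*t*l)) := by
    field_simp
    ring
  nlinarith [key,
    div_nonneg (mul_nonneg (mul_nonneg (by positivity : (0:ℝ) ≤ κ*(s*t)^2*l+b^2) (by positivity : (0:ℝ) ≤ s*t*l)) (sq_nonneg (τ-t))) (by positivity : (0:ℝ) ≤ (t+s*t*l)^2*(τ+s*t*l))]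

lemma sp_invtan {c t τ : ℝ} (ht : 0 < t) (hτ : 0 < τ) :
    c/τ - c/t = -(c*(τ-t)/t^2) + c*(τ-t)^2/(τ*t^2) := by
  field_simp
  ring
set_option maxHeartbeats 2000000 in
theorem unique_saddle_point_of_D
    (κ σ Smin Smax : ℝ) (hκ : 1 < κ) (hσ : 0 < σ)
    (hSmin : 0 < Smin) (hSminmax : Smin ≤ Smax)
    (μ : Measure (ℝ × ℝ)) [IsProbabilityMeasure μ]
    -- Λ supported in [Σmin, Σmax] ⊂ (0,∞), and E[B²Λ] < ∞
    (hμsupp : ∀ᵐ x ∂μ, x.1 ∈ Set.Icc Smin Smax)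
    (hBL : Integrable (fun x => x.2 ^ 2 * x.1) μ)
    -- the concave-convex objective D(u,τ)
    (D : ℝ → ℝ → ℝ)
    (hD : ∀ u τ, D u τ = (1 / 2) * (u * τ + u * σ ^ 2 / τ
      - u ^ 2 * κ * ∫ x, (x.1⁻¹ + u / τ)⁻¹ ∂μ
      - ∫ x, x.2 ^ 2 * x.1⁻¹ / (x.1⁻¹ + u / τ) ∂μ)) :
    -- there exists a unique saddle point (u*, τ*), and it satisfies
    -- u*/τ* = ξ (the unique positive solution of the fixed-point equation)
    -- and τ*² = γ
    ∃ ustar τstar : ℝ, 0 ≤ ustar ∧ 0 < τstar ∧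
      (∀ u : ℝ, 0 ≤ u → D u τstar ≤ D ustar τstar) ∧
      (∀ τ : ℝ, 0 < τ → D ustar τstar ≤ D ustar τ) ∧
      (∀ u τ : ℝ, 0 ≤ u → 0 < τ →
        (∀ u' : ℝ, 0 ≤ u' → D u' τ ≤ D u τ) →
        (∀ τ' : ℝ, 0 < τ' → D u τ ≤ D u τ') → u = ustar ∧ τ = τstar) ∧
      (0 < ustar / τstar ∧
        ∫ x, (1 + (ustar / τstar * x.1)⁻¹)⁻¹ ∂μ = κ⁻¹ ∧
        (∀ ξ' : ℝ, 0 < ξ' → (∫ x, (1 + (ξ' * x.1)⁻¹)⁻¹ ∂μ = κ⁻¹) → ξ' = ustar / τstar) ∧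
        τstar ^ 2 = (σ ^ 2 + ∫ x, x.2 ^ 2 * x.1⁻¹ / (x.1⁻¹ + ustar / τstar) ^ 2 ∂μ) /
          (1 - κ * ∫ x, (((ustar / τstar * x.1)⁻¹ + 1)⁻¹) ^ 2 ∂μ)) := by
  have hκ0 : (0:ℝ) < κ := by linarith
  have hSmax : 0 < Smax := lt_of_lt_of_le hSmin hSminmax
  -- integrability of the fixed-point integrand
  have hintF : ∀ ξ : ℝ, 0 < ξ → Integrable (fun x : ℝ × ℝ => (1 + (ξ * x.1)⁻¹)⁻¹) μ := by
    intro ξ hξ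
    refine sp_int_bdd (Measurable.aestronglyMeasurable (by fun_prop)) (C := 1) ?_
    filter_upwards [hμsupp] with x hx
    have hl : 0 < x.1 := lt_of_lt_of_le hSmin hx.1
    obtain ⟨h1, h2⟩ := sp_pb1 hξ hl
    rw [abs_le]; exact ⟨by linarith, h2⟩
  have hFub : ∀ ξ : ℝ, 0 < ξ → (∫ x, (1 + (ξ * x.1)⁻¹)⁻¹ ∂μ) ≤ ξ * Smax := by
    intro ξ hξ
    have h := integral_mono_ae (hintF ξ hξ) (integrable_const (ξ * Smax)) ?_
    · simpa using h
    · filter_upwards [hμsupp] with x hx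
      exact sp_pb2 hξ (lt_of_lt_of_le hSmin hx.1) hx.2
  have hFlb : ∀ ξ : ℝ, 0 < ξ → 1 - (1 + ξ * Smin)⁻¹ ≤ ∫ x, (1 + (ξ * x.1)⁻¹)⁻¹ ∂μ := by
    intro ξ hξ
    have h := integral_mono_ae (integrable_const (1 - (1 + ξ * Smin)⁻¹)) (hintF ξ hξ) ?_
    · simpa using h
    · filter_upwards [hμsupp] with x hx
      exact sp_pb3 hξ hSmin hx.1
  have hFdiff : ∀ a b : ℝ, 0 < a → a ≤ b →
      (b - a) * Smin / (1 + b * Smax) ^ 2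
          ≤ (∫ x, (1 + (b * x.1)⁻¹)⁻¹ ∂μ) - (∫ x, (1 + (a * x.1)⁻¹)⁻¹ ∂μ)
        ∧ (∫ x, (1 + (b * x.1)⁻¹)⁻¹ ∂μ) - (∫ x, (1 + (a * x.1)⁻¹)⁻¹ ∂μ) ≤ (b - a) * Smax := by
    intro a b ha hab
    have hb : 0 < b := lt_of_lt_of_le ha hab
    have heq : (∫ x, (1 + (b * x.1)⁻¹)⁻¹ ∂μ) - (∫ x, (1 + (a * x.1)⁻¹)⁻¹ ∂μ)
        = ∫ x, ((1 + (b * x.1)⁻¹)⁻¹ - (1 + (a * x.1)⁻¹)⁻¹) ∂μ :=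
      (integral_sub (hintF b hb) (hintF a ha)).symm
    constructor
    · rw [heq]
      have h := integral_mono_ae (integrable_const ((b - a) * Smin / (1 + b * Smax) ^ 2))
        ((hintF b hb).sub (hintF a ha)) ?_
      · simpa using h
      · filter_upwards [hμsupp] with x hx
        exact (sp_pb4 ha hab hSmin hx.1 hx.2).1
    · rw [heq]
      have h := integral_mono_ae ((hintF b hb).sub (hintF a ha))
        (integrable_const ((b - a) * Smax)) ?_
      · simpa using h
      · filter_upwards [hμsupp] with x hx
        exact (sp_pb4 ha hab hSmin hx.1 hx.2).2
  -- construct the fixed point s = ξ*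
  obtain ⟨s, hs, hFs, huniqS⟩ : ∃ s : ℝ, 0 < s ∧ (∫ x, (1 + (s * x.1)⁻¹)⁻¹ ∂μ) = κ⁻¹ ∧
      ∀ ξ' : ℝ, 0 < ξ' → (∫ x, (1 + (ξ' * x.1)⁻¹)⁻¹ ∂μ) = κ⁻¹ → ξ' = s := by
    have ha0 : (0:ℝ) < (2*κ*Smax)⁻¹ := by positivity
    have hb0 : (2*κ*Smax)⁻¹ ≤ (2*κ*Smax)⁻¹ + 2/((κ-1)*Smin) := by
      have : (0:ℝ) < 2/((κ-1)*Smin) := by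
        apply div_pos two_pos; exact mul_pos (by linarith) hSmin
      linarith
    set a0 : ℝ := (2*κ*Smax)⁻¹ with ha0def
    set b0 : ℝ := (2*κ*Smax)⁻¹ + 2/((κ-1)*Smin) with hb0def
    have hb0pos : 0 < b0 := lt_of_lt_of_le ha0 hb0
    have hcont : ContinuousOn (fun ξ : ℝ => ∫ x, (1 + (ξ * x.1)⁻¹)⁻¹ ∂μ) (Set.Icc a0 b0) := by
      refine LipschitzOnWith.continuousOn (K := Real.toNNReal Smax) ?_
      refine LipschitzOnWith.of_dist_le_mul ?_
      intro p hp q hq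
      simp only [Real.dist_eq, Real.coe_toNNReal _ hSmax.le]
      rcases le_total p q with h | h
      · have h1 := hFdiff p q (lt_of_lt_of_le ha0 hp.1) h
        have hge : 0 ≤ (∫ x, (1 + (q * x.1)⁻¹)⁻¹ ∂μ) - ∫ x, (1 + (p * x.1)⁻¹)⁻¹ ∂μ :=
          le_trans (div_nonneg (mul_nonneg (by linarith) hSmin.le) (by positivity)) h1.1
        rw [abs_sub_comm, abs_of_nonneg hge, abs_of_nonpos (by linarith : p - q ≤ 0)]
        nlinarith [h1.2]
      · have h1 := hFdiff q p (lt_of_lt_of_le ha0 hq.1) h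
        have hge : 0 ≤ (∫ x, (1 + (p * x.1)⁻¹)⁻¹ ∂μ) - ∫ x, (1 + (q * x.1)⁻¹)⁻¹ ∂μ :=
          le_trans (div_nonneg (mul_nonneg (by linarith) hSmin.le) (by positivity)) h1.1
        rw [abs_of_nonneg hge, abs_of_nonneg (by linarith : 0 ≤ p - q)]
        nlinarith [h1.2]
    have hmem : κ⁻¹ ∈ Set.Icc ((fun ξ : ℝ => ∫ x, (1 + (ξ * x.1)⁻¹)⁻¹ ∂μ) a0)
        ((fun ξ : ℝ => ∫ x, (1 + (ξ * x.1)⁻¹)⁻¹ ∂μ) b0) := by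
      rw [Set.mem_Icc]
      constructor
      · show (∫ x, (1 + (a0 * x.1)⁻¹)⁻¹ ∂μ) ≤ κ⁻¹
        have h1 := hFub a0 ha0
        have h2 : a0 * Smax = (2*κ)⁻¹ := by
          rw [ha0def]; field_simp
        have h3 : (2*κ)⁻¹ ≤ κ⁻¹ := inv_anti₀ hκ0 (by linarith)
        linarith
      · show κ⁻¹ ≤ ∫ x, (1 + (b0 * x.1)⁻¹)⁻¹ ∂μ
        have h1 := hFlb b0 hb0pos
        have hz : 2 ≤ b0 * ((κ-1)*Smin) := by
          have h4 : 2/((κ-1)*Smin) ≤ b0 := by rw [hb0def]; linarith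
          calc (2:ℝ) = 2/((κ-1)*Smin) * ((κ-1)*Smin) :=
                (div_mul_cancel₀ (2:ℝ) (ne_of_gt (mul_pos (by linarith) hSmin))).symm
            _ ≤ b0 * ((κ-1)*Smin) :=
                mul_le_mul_of_nonneg_right h4 (le_of_lt (mul_pos (by linarith) hSmin))
        have h5 : (0:ℝ) < 1 + b0*Smin := by nlinarith [mul_pos hb0pos hSmin]
        have h6 : κ⁻¹ ≤ 1 - (1 + b0*Smin)⁻¹ := by
          have h11 : κ/(κ-1) ≤ 1 + b0*Smin := by
            rw [div_le_iff₀ (by linarith : (0:ℝ) < κ - 1)]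
            nlinarith [hz]
          have h12 : (1 + b0*Smin)⁻¹ ≤ (κ/(κ-1))⁻¹ :=
            inv_anti₀ (div_pos hκ0 (by linarith)) h11
          have h13 : (κ/(κ-1))⁻¹ = 1 - κ⁻¹ := by
            rw [inv_div]
            field_simp
          linarith
        linarith
    obtain ⟨s, hsmem, hFs⟩ := intermediate_value_Icc hb0 hcont hmem
    have hs : 0 < s := lt_of_lt_of_le ha0 hsmem.1
    refine ⟨s, hs, hFs, ?_⟩
    intro ξ' hξ' hFξ'
    by_contra hne
    rcases lt_or_gt_of_ne hne with h | h
    · have h1 := (hFdiff ξ' s hξ' h.le).1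
      have h2 : 0 < (s - ξ')*Smin/(1+s*Smax)^2 :=
        div_pos (mul_pos (by linarith) hSmin) (by positivity)
      rw [hFξ'] at h1
      have : (fun ξ : ℝ => ∫ x, (1 + (ξ * x.1)⁻¹)⁻¹ ∂μ) s = ∫ x, (1 + (s * x.1)⁻¹)⁻¹ ∂μ := rfl
      rw [this] at hFs
      rw [hFs] at h1
      linarith
    · have h1 := (hFdiff s ξ' hs h.le).1
      have h2 : 0 < (ξ' - s)*Smin/(1+ξ'*Smax)^2 :=
        div_pos (mul_pos (by linarith) hSmin) (by positivity)
      rw [hFξ'] at h1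
      have : (fun ξ : ℝ => ∫ x, (1 + (ξ * x.1)⁻¹)⁻¹ ∂μ) s = ∫ x, (1 + (s * x.1)⁻¹)⁻¹ ∂μ := rfl
      rw [this] at hFs
      rw [hFs] at h1
      linarith
  -- named integrals
  obtain ⟨I2, hI2def⟩ : ∃ r : ℝ, r = ∫ x, ((1 + s * x.1)⁻¹) ^ 2 ∂μ := ⟨_, rfl⟩
  obtain ⟨Q, hQdef⟩ : ∃ r : ℝ, r = ∫ x, (((s * x.1)⁻¹ + 1)⁻¹) ^ 2 ∂μ := ⟨_, rfl⟩
  obtain ⟨W5, hW5def⟩ : ∃ r : ℝ, r = ∫ x, x.2 ^ 2 * x.1⁻¹ / (x.1⁻¹ + s) ^ 2 ∂μ := ⟨_, rfl⟩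
  obtain ⟨W6, hW6def⟩ : ∃ r : ℝ, r = ∫ x, x.2 ^ 2 * x.1 / (1 + s * x.1) ^ 2 ∂μ := ⟨_, rfl⟩
  -- integrability of named integrands
  have hintI1 : Integrable (fun x : ℝ × ℝ => (1 + s * x.1)⁻¹) μ := by
    refine sp_int_bdd (Measurable.aestronglyMeasurable (by fun_prop)) (C := 1) ?_
    filter_upwards [hμsupp] with x hx
    have hl : 0 < x.1 := lt_of_lt_of_le hSmin hx.1
    have h0 : (0:ℝ) < 1 + s * x.1 := by positivity
    rw [abs_of_nonneg (inv_nonneg.2 h0.le), inv_le_one_iff₀]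
    right; nlinarith [mul_pos hs hl]
  have hintI2 : Integrable (fun x : ℝ × ℝ => ((1 + s * x.1)⁻¹) ^ 2) μ := by
    refine sp_int_bdd (Measurable.aestronglyMeasurable (by fun_prop)) (C := 1) ?_
    filter_upwards [hμsupp] with x hx
    have hl : 0 < x.1 := lt_of_lt_of_le hSmin hx.1
    have h0 : (0:ℝ) < 1 + s * x.1 := by positivity
    have h1 : (1 + s*x.1)⁻¹ ≤ 1 := by
      rw [inv_le_one_iff₀]; right; nlinarith [mul_pos hs hl]
    have h2 : 0 ≤ (1 + s*x.1)⁻¹ := inv_nonneg.2 h0.le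
    rw [abs_of_nonneg (sq_nonneg _)]
    nlinarith
  have hintQ : Integrable (fun x : ℝ × ℝ => (((s * x.1)⁻¹ + 1)⁻¹) ^ 2) μ := by
    refine sp_int_bdd (Measurable.aestronglyMeasurable (by fun_prop)) (C := 1) ?_
    filter_upwards [hμsupp] with x hx
    have hl : 0 < x.1 := lt_of_lt_of_le hSmin hx.1
    obtain ⟨h1, h2⟩ := sp_pb1 hs hl
    rw [abs_of_nonneg (sq_nonneg _), add_comm ((s * x.1)⁻¹) 1]
    nlinarith
  have hintW6 : Integrable (fun x : ℝ × ℝ => x.2 ^ 2 * x.1 / (1 + s * x.1) ^ 2) μ := by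
    refine sp_int_dom hBL (Measurable.aestronglyMeasurable (by fun_prop)) 0 1 ?_
    filter_upwards [hμsupp] with x hx
    have hl : 0 < x.1 := lt_of_lt_of_le hSmin hx.1
    have h0 : (0:ℝ) < 1 + s * x.1 := by positivity
    have h1 : (1:ℝ) ≤ (1 + s*x.1)^2 := by nlinarith [mul_pos hs hl]
    have h2 : x.2 ^ 2 * x.1 / (1 + s * x.1) ^ 2 ≤ x.2 ^ 2 * x.1 :=
      div_le_self (by positivity) h1
    rw [abs_of_nonneg (by positivity)]
    linarith
  have hintW5 : Integrable (fun x : ℝ × ℝ => x.2 ^ 2 * x.1⁻¹ / (x.1⁻¹ + s) ^ 2) μ := by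
    refine hintW6.congr ?_
    filter_upwards [hμsupp] with x hx
    exact (sp_id3 hs (lt_of_lt_of_le hSmin hx.1)).symm
  -- value identities
  have hI1val : (∫ x, (1 + s * x.1)⁻¹ ∂μ) = 1 - κ⁻¹ := by
    have h1 : (∫ x, (1 + (s * x.1)⁻¹)⁻¹ ∂μ) = ∫ x, (1 - (1 + s * x.1)⁻¹) ∂μ := by
      refine integral_congr_ae ?_
      filter_upwards [hμsupp] with x hx
      exact sp_id1 hs (lt_of_lt_of_le hSmin hx.1)
    rw [integral_sub (integrable_const 1) hintI1] at h1
    simp only [integral_const, measure_univ, probReal_univ, ENNReal.toReal_one, one_smul] at h1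
    rw [hFs] at h1
    linarith
  have hQval : Q = 2*κ⁻¹ - 1 + I2 := by
    rw [hQdef, hI2def]
    have h1 : (∫ x, (((s * x.1)⁻¹ + 1)⁻¹) ^ 2 ∂μ)
        = ∫ x, (1 - 2*(1 + s * x.1)⁻¹ + ((1 + s * x.1)⁻¹) ^ 2) ∂μ := by
      refine integral_congr_ae ?_
      filter_upwards [hμsupp] with x hx
      exact sp_id2 hs (lt_of_lt_of_le hSmin hx.1)
    have hm2 : Integrable (fun x : ℝ × ℝ => 2*(1 + s * x.1)⁻¹) μ := by
      exact hintI1.const_mul 2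
    have hf12 : Integrable (fun x : ℝ × ℝ => 1 - 2*(1 + s * x.1)⁻¹) μ := by
      exact (integrable_const 1).sub hm2
    rw [h1, integral_add hf12 hintI2,
      integral_sub (integrable_const 1) hm2, integral_const_mul, hI1val]
    simp only [integral_const, measure_univ, probReal_univ, ENNReal.toReal_one, one_smul]
    ring
  have hW56 : W5 = W6 := by
    rw [hW5def, hW6def]
    refine integral_congr_ae ?_
    filter_upwards [hμsupp] with x hx
    exact sp_id3 hs (lt_of_lt_of_le hSmin hx.1)
  have hW5nn : 0 ≤ W5 := by
    rw [hW5def]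
    refine integral_nonneg_of_ae ?_
    filter_upwards [hμsupp] with x hx
    have hl : 0 < x.1 := lt_of_lt_of_le hSmin hx.1
    exact div_nonneg (mul_nonneg (sq_nonneg _) (inv_nonneg.2 hl.le)) (sq_nonneg _)
  have hdg : 0 < 1 - κ * Q := by
    have hQle : Q ≤ (s*Smax/(1+s*Smax)) * κ⁻¹ := by
      rw [hQdef]
      have h := integral_mono_ae hintQ ((hintF s hs).const_mul (s*Smax/(1+s*Smax))) ?_
      · rwa [integral_const_mul, hFs] at h
      · filter_upwards [hμsupp] with x hx
        exact sp_id5 hs (lt_of_lt_of_le hSmin hx.1) hx.2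
    have hM : s*Smax/(1+s*Smax) < 1 := by
      rw [div_lt_one (by positivity)]; linarith
    have h2 : κ*Q ≤ κ*((s*Smax/(1+s*Smax))*κ⁻¹) := mul_le_mul_of_nonneg_left hQle hκ0.le
    have h3 : κ*((s*Smax/(1+s*Smax))*κ⁻¹) = s*Smax/(1+s*Smax) := by
      rw [mul_comm (s*Smax/(1+s*Smax)) κ⁻¹, ← mul_assoc, mul_inv_cancel₀ hκ0.ne', one_mul]
    rw [h3] at h2
    linarith
  -- define τ* = t
  have hγ : 0 < (σ^2 + W5)/(1 - κ*Q) :=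
    div_pos (by positivity) hdg
  obtain ⟨t, ht, ht2⟩ : ∃ t : ℝ, 0 < t ∧ t^2 = (σ^2 + W5)/(1 - κ*Q) :=
    ⟨Real.sqrt _, Real.sqrt_pos.2 hγ, Real.sq_sqrt hγ.le⟩
  have hkey : t^2*(1 - κ*Q) = σ^2 + W5 := by
    rw [ht2]; field_simp
  -- the first-order identity
  have hFOC1 : κ*t*(1 - I2) - W6/t = t + σ^2/t := by
    have h1 : 1 - κ*Q = κ - 1 - κ*I2 := by
      rw [hQval]
      have h0 : κ*κ⁻¹ = 1 := mul_inv_cancel₀ hκ0.ne'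
      nlinarith [h0]
    have h2 : W6 = t^2*(κ-1-κ*I2) - σ^2 := by
      rw [← h1, ← hW56]; linarith [hkey]
    rw [h2]
    field_simp
    ring
  have hbr : κ*Q + W6/t^2 = 1 - σ^2/t^2 := by
    have h2 : W6 = t^2*(1-κ*Q) - σ^2 := by rw [← hW56]; linarith [hkey]
    rw [h2]
    field_simp
    ring
  -- integrability of derivative integrands
  have hintA : Integrable (fun x : ℝ × ℝ => κ*t*(1 - ((1 + s * x.1)⁻¹) ^ 2)) μ :=
    ((integrable_const 1).sub hintI2).const_mul (κ*t)
  have hintB : Integrable (fun x : ℝ × ℝ => x.2 ^ 2 * x.1 / (1 + s * x.1) ^ 2 / t) μ :=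
    hintW6.div_const t
  have hintdphi : Integrable
      (fun x : ℝ × ℝ => κ*t*(1 - ((1 + s * x.1)⁻¹) ^ 2) - x.2 ^ 2 * x.1 / (1 + s * x.1) ^ 2 / t) μ :=
    hintA.sub hintB
  have hintdpsi : Integrable (fun x : ℝ × ℝ =>
      (s*t)*(κ*(((s * x.1)⁻¹ + 1)⁻¹) ^ 2 + x.2 ^ 2 * x.1 / (1 + s * x.1) ^ 2 / t^2)) μ :=
    ((hintQ.const_mul κ).add (hintW6.div_const (t^2))).const_mul (s*t)
  have hTval : (∫ x, (κ*t*(1 - ((1 + s * x.1)⁻¹) ^ 2) - x.2 ^ 2 * x.1 / (1 + s * x.1) ^ 2 / t) ∂μ)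
      = κ*t*(1 - I2) - W6/t := by
    rw [integral_sub hintA hintB, integral_const_mul,
      integral_sub (integrable_const 1) hintI2, integral_div, ← hI2def, ← hW6def]
    simp only [integral_const, measure_univ, probReal_univ, ENNReal.toReal_one, one_smul]
  have hSval : (∫ x, (s*t)*(κ*(((s * x.1)⁻¹ + 1)⁻¹) ^ 2 + x.2 ^ 2 * x.1 / (1 + s * x.1) ^ 2 / t^2) ∂μ)
      = (s*t)*(κ*Q + W6/t^2) := by
    rw [integral_const_mul, integral_add (hintQ.const_mul κ) (hintW6.div_const (t^2)),
      integral_const_mul, integral_div, ← hQdef, ← hW6def]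
  -- the combined objective
  have hint7 : ∀ u τ : ℝ, 0 ≤ u → 0 < τ → Integrable (fun x : ℝ × ℝ => (x.1⁻¹ + u / τ)⁻¹) μ := by
    intro u τ hu hτ
    refine sp_int_bdd (Measurable.aestronglyMeasurable (by fun_prop)) (C := Smax) ?_
    filter_upwards [hμsupp] with x hx
    have hl : 0 < x.1 := lt_of_lt_of_le hSmin hx.1
    have h0 : 0 < x.1⁻¹ + u/τ := by positivity
    rw [abs_of_nonneg (inv_nonneg.2 h0.le)]
    calc (x.1⁻¹ + u/τ)⁻¹ ≤ (x.1⁻¹)⁻¹ :=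
          inv_anti₀ (inv_pos.2 hl) (le_add_of_nonneg_right (div_nonneg hu hτ.le))
      _ = x.1 := inv_inv x.1
      _ ≤ Smax := hx.2
  have hint8 : ∀ u τ : ℝ, 0 ≤ u → 0 < τ →
      Integrable (fun x : ℝ × ℝ => x.2 ^ 2 * x.1⁻¹ / (x.1⁻¹ + u / τ)) μ := by
    intro u τ hu hτ
    refine sp_int_dom hBL (Measurable.aestronglyMeasurable (by fun_prop)) 0 Smin⁻¹ ?_
    filter_upwards [hμsupp] with x hx
    have hl : 0 < x.1 := lt_of_lt_of_le hSmin hx.1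
    have h0 : 0 < x.1⁻¹ + u/τ := by positivity
    have hval : x.2 ^ 2 * x.1⁻¹ / (x.1⁻¹ + u / τ) ≤ x.2 ^ 2 := by
      rw [div_le_iff₀ h0]
      have : x.2 ^ 2 * x.1⁻¹ ≤ x.2 ^ 2 * (x.1⁻¹ + u/τ) :=
        mul_le_mul_of_nonneg_left (le_add_of_nonneg_right (div_nonneg hu hτ.le)) (sq_nonneg _)
      linarith
    have h1 : x.2 ^ 2 * Smin ≤ x.2 ^ 2 * x.1 := mul_le_mul_of_nonneg_left hx.1 (sq_nonneg _)
    have h2 : Smin⁻¹*(x.2 ^ 2 * Smin) ≤ Smin⁻¹*(x.2 ^ 2 * x.1) :=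
      mul_le_mul_of_nonneg_left h1 (inv_pos.2 hSmin).le
    have h3 : Smin⁻¹*(x.2 ^ 2 * Smin) = x.2 ^ 2 := by field_simp
    rw [abs_of_nonneg (by positivity)]
    linarith
  have hint9 : ∀ u τ : ℝ, 0 ≤ u → 0 < τ →
      Integrable (fun x : ℝ × ℝ => (κ*u^2*x.1 + x.2 ^ 2)*τ/(τ + u*x.1)) μ := by
    intro u τ hu hτ
    refine (((hint7 u τ hu hτ).const_mul (κ*u^2)).add (hint8 u τ hu hτ)).congr ?_
    filter_upwards [hμsupp] with x hx
    exact sp_id4 hκ0 hu hτ (lt_of_lt_of_le hSmin hx.1)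
  have hGval : ∀ u τ : ℝ, 0 ≤ u → 0 < τ →
      u^2*κ*(∫ x, (x.1⁻¹ + u / τ)⁻¹ ∂μ) + (∫ x, x.2 ^ 2 * x.1⁻¹ / (x.1⁻¹ + u / τ) ∂μ)
        = ∫ x, (κ*u^2*x.1 + x.2 ^ 2)*τ/(τ + u*x.1) ∂μ := by
    intro u τ hu hτ
    rw [show (∫ x, (κ*u^2*x.1 + x.2 ^ 2)*τ/(τ + u*x.1) ∂μ)
        = ∫ x, (κ*u^2*(x.1⁻¹ + u / τ)⁻¹ + x.2 ^ 2 * x.1⁻¹ / (x.1⁻¹ + u / τ)) ∂μ from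
      integral_congr_ae (by
        filter_upwards [hμsupp] with x hx
        exact (sp_id4 hκ0 hu hτ (lt_of_lt_of_le hSmin hx.1)).symm)]
    rw [integral_add ((hint7 u τ hu hτ).const_mul (κ*u^2)) (hint8 u τ hu hτ), integral_const_mul]
    ring
  have hDeq : ∀ u τ : ℝ, 0 ≤ u → 0 < τ →
      D u τ = (u*τ + u*σ^2/τ - ∫ x, (κ*u^2*x.1 + x.2 ^ 2)*τ/(τ + u*x.1) ∂μ)/2 := by
    intro u τ hu hτ
    rw [hD u τ, ← hGval u τ hu hτ]
    ring
  have hstpos : (0:ℝ) < s*t := mul_pos hs ht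
  -- Part D : maximality in u at u* = s*t, with quantitative gap
  have hPartD : ∀ u : ℝ, 0 ≤ u →
      D u t ≤ D (s*t) t - κ*t^3*Smin/((t+u*Smax)*(t+s*t*Smax)^2)/2*(u-s*t)^2 := by
    intro u hu
    have hptwise : ∀ᵐ x ∂μ, ((κ*(s*t)^2*x.1+x.2^2)*t/(t+s*t*x.1)
        + (u-s*t)*(κ*t*(1-((1+s*x.1)⁻¹)^2) - x.2^2*x.1/(1+s*x.1)^2/t))
        + κ*t^3*Smin/((t+u*Smax)*(t+s*t*Smax)^2)*(u-s*t)^2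
        ≤ (κ*u^2*x.1+x.2^2)*t/(t+u*x.1) := by
      filter_upwards [hμsupp] with x hx
      have h := sp_keyu (b := x.2) hκ0 ht hs hu hSmin hx.1 hx.2
      linarith
    have hint_ab : Integrable (fun x : ℝ × ℝ => (κ*(s*t)^2*x.1+x.2^2)*t/(t+s*t*x.1)
        + (u-s*t)*(κ*t*(1-((1+s*x.1)⁻¹)^2) - x.2^2*x.1/(1+s*x.1)^2/t)) μ := by
      exact (hint9 (s*t) t hstpos.le ht).add (hintdphi.const_mul (u-s*t))
    have hintL : Integrable (fun x : ℝ × ℝ => ((κ*(s*t)^2*x.1+x.2^2)*t/(t+s*t*x.1)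
        + (u-s*t)*(κ*t*(1-((1+s*x.1)⁻¹)^2) - x.2^2*x.1/(1+s*x.1)^2/t))
        + κ*t^3*Smin/((t+u*Smax)*(t+s*t*Smax)^2)*(u-s*t)^2) μ := by
      exact hint_ab.add (integrable_const _)
    have hmono := integral_mono_ae hintL (hint9 u t hu ht) hptwise
    rw [integral_add hint_ab (integrable_const _),
      integral_add (hint9 (s*t) t hstpos.le ht) (hintdphi.const_mul (u-s*t)),
      integral_const_mul, hTval, hFOC1, integral_const] at hmono
    simp only [measure_univ, probReal_univ, ENNReal.toReal_one, one_smul] at hmono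
    rw [hDeq u t hu ht, hDeq (s*t) t hstpos.le ht]
    have hexp : (u - s*t)*(t + σ^2/t) = u*t + u*σ^2/t - s*t*t - s*t*σ^2/t := by ring
    rw [hexp] at hmono
    linarith
  have hPartDplain : ∀ u : ℝ, 0 ≤ u → D u t ≤ D (s*t) t := by
    intro u hu
    have h := hPartD u hu
    have hpen : 0 ≤ κ*t^3*Smin/((t+u*Smax)*(t+s*t*Smax)^2)/2*(u-s*t)^2 := by positivity
    linarith
  -- Part E : minimality in τ at τ* = t, with quantitative gap
  have hPartE : ∀ τ : ℝ, 0 < τ →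
      D (s*t) t + (s*t)*σ^2*(τ-t)^2/(τ*t^2)/2 ≤ D (s*t) τ := by
    intro τ hτ
    have hptwise : ∀ᵐ x ∂μ, (κ*(s*t)^2*x.1+x.2^2)*τ/(τ+s*t*x.1)
        ≤ (κ*(s*t)^2*x.1+x.2^2)*t/(t+s*t*x.1)
          + (τ-t)*((s*t)*(κ*((((s*x.1))⁻¹+1)⁻¹)^2 + x.2^2*x.1/(1+s*x.1)^2/t^2)) := by
      filter_upwards [hμsupp] with x hx
      exact sp_keyt (b := x.2) hκ0 ht hs hτ (lt_of_lt_of_le hSmin hx.1)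
    have hintR : Integrable (fun x : ℝ × ℝ => (κ*(s*t)^2*x.1+x.2^2)*t/(t+s*t*x.1)
        + (τ-t)*((s*t)*(κ*((((s*x.1))⁻¹+1)⁻¹)^2 + x.2^2*x.1/(1+s*x.1)^2/t^2)) ) μ := by
      exact (hint9 (s*t) t hstpos.le ht).add (hintdpsi.const_mul (τ-t))
    have hmono := integral_mono_ae (hint9 (s*t) τ hstpos.le hτ) hintR hptwise
    rw [integral_add (hint9 (s*t) t hstpos.le ht) (hintdpsi.const_mul (τ-t)),
      integral_const_mul, hSval, hbr] at hmono
    rw [hDeq (s*t) τ hstpos.le hτ, hDeq (s*t) t hstpos.le ht]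
    have hσd := sp_invtan (c := (s*t)*σ^2) ht hτ
    have hexp : (τ-t)*((s*t)*(1 - σ^2/t^2)) = s*t*τ - s*t*t - (s*t)*σ^2*(τ-t)/t^2 := by ring
    rw [hexp] at hmono
    have hσd' : (s*t)*σ^2/τ - (s*t)*σ^2/t
        = -((s*t)*σ^2*(τ-t)/t^2) + (s*t)*σ^2*(τ-t)^2/(τ*t^2) := hσd
    linarith
  have hPartEplain : ∀ τ : ℝ, 0 < τ → D (s*t) t ≤ D (s*t) τ := by
    intro τ hτ
    have h := hPartE τ hτ
    have hpen : 0 ≤ (s*t)*σ^2*(τ-t)^2/(τ*t^2)/2 := by positivity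
    linarith
  -- uniqueness of the saddle point
  have hUniq : ∀ u τ : ℝ, 0 ≤ u → 0 < τ →
      (∀ u' : ℝ, 0 ≤ u' → D u' τ ≤ D u τ) →
      (∀ τ' : ℝ, 0 < τ' → D u τ ≤ D u τ') → u = s*t ∧ τ = t := by
    intro u τ hu hτ hmax hmin
    have e1 : D u τ ≤ D u t := hmin t ht
    have e2 : D u t ≤ D (s*t) t := hPartDplain u hu
    have e3 : D (s*t) t ≤ D (s*t) τ := hPartEplain τ hτ
    have e4 : D (s*t) τ ≤ D u τ := hmax (s*t) hstpos.le
    have hEq1 : D u t = D (s*t) t := le_antisymm e2 (by linarith)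
    have hcpos : 0 < κ*t^3*Smin/((t+u*Smax)*(t+s*t*Smax)^2)/2 := by positivity
    have hsq0 : κ*t^3*Smin/((t+u*Smax)*(t+s*t*Smax)^2)/2*(u - s*t)^2 ≤
        κ*t^3*Smin/((t+u*Smax)*(t+s*t*Smax)^2)/2*0 := by
      have h := hPartD u hu
      rw [mul_zero]
      linarith
    have hsq : (u - s*t)^2 ≤ 0 := le_of_mul_le_mul_left hsq0 hcpos
    have hueq : u = s*t := by
      have h3 : (u - s*t)^2 = 0 := le_antisymm hsq (sq_nonneg _)
      have h4 : u - s*t = 0 := pow_eq_zero_iff (by norm_num : (2:ℕ) ≠ 0) |>.mp h3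
      linarith
    have e5 : D u t ≤ D u τ := by rw [hueq]; exact e3
    have hEq2 : D u τ = D u t := le_antisymm e1 e5
    refine ⟨hueq, ?_⟩
    have hp := hPartE τ hτ
    rw [← hueq] at hp
    have hupos : 0 < u := by rw [hueq]; exact hstpos
    have hpen : 0 < u*σ^2/(τ*t^2)/2 := by positivity
    have hre : u*σ^2*(τ-t)^2/(τ*t^2)/2 = u*σ^2/(τ*t^2)/2*(τ-t)^2 := by ring
    rw [hre] at hp
    have hsqτ0 : u*σ^2/(τ*t^2)/2*(τ-t)^2 ≤ u*σ^2/(τ*t^2)/2*0 := by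
      rw [mul_zero]
      linarith
    have hsqτ : (τ-t)^2 ≤ 0 := le_of_mul_le_mul_left hsqτ0 hpen
    have h5 : (τ-t)^2 = 0 := le_antisymm hsqτ (sq_nonneg _)
    have h6 : τ - t = 0 := pow_eq_zero_iff (by norm_num : (2:ℕ) ≠ 0) |>.mp h5
    linarith
  -- assemble
  have hcancel : s*t/t = s := mul_div_cancel_right₀ s ht.ne'
  refine ⟨s*t, t, hstpos.le, ht, hPartDplain, hPartEplain, hUniq, ?_, ?_, ?_, ?_⟩
  · rw [hcancel]; exact hs
  · rw [hcancel]; exact hFs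
  · intro ξ' h1 h2
    rw [hcancel]
    exact huniqS ξ' h1 h2
  · rw [hcancel, ht2, hW5def, hQdef]
end
end

section
/- Let g : ℝ → ℝ be Lipschitz and define f : ℝ³ → ℝ by f(x₁,x₂,x₃) = x₃(x₂ − g(x₁))². Then f is pseudo-Lipschitz of order 3. Moreover, if the third argument is restricted to a bounded set Z ⊂ ℝ, then f : ℝ²×Z → ℝ belongs to the class F, i.e., f ∈ PL(3) and the PL(2) constants of f(·,·,z) are uniformly bounded over z ∈ Z. In particular, taking Z = [Σ_min,Σ_max], every function of the form f(x,y,z) = z(y − g(x))² with g Lipschitz (the class F_L) belongs to F. -/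
open MeasureTheory ProbabilityTheory Filter Finset Matrix

noncomputable section

lemma en2_nonneg (v : ℝ × ℝ) : 0 ≤ en2 v := Real.sqrt_nonneg _
lemma en3_nonneg (v : ℝ × ℝ × ℝ) : 0 ≤ en3 v := Real.sqrt_nonneg _
lemma abs_fst_le_en2 (v : ℝ × ℝ) : |v.1| ≤ en2 v := by
  rw [← Real.sqrt_sq_eq_abs]; exact Real.sqrt_le_sqrt (by nlinarith [sq_nonneg v.2])
lemma abs_snd_le_en2 (v : ℝ × ℝ) : |v.2| ≤ en2 v := by
  rw [← Real.sqrt_sq_eq_abs]; exact Real.sqrt_le_sqrt (by nlinarith [sq_nonneg v.1])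
lemma abs_1_le_en3 (v : ℝ × ℝ × ℝ) : |v.1| ≤ en3 v := by
  rw [← Real.sqrt_sq_eq_abs]
  exact Real.sqrt_le_sqrt (by nlinarith [sq_nonneg v.2.1, sq_nonneg v.2.2])
lemma abs_21_le_en3 (v : ℝ × ℝ × ℝ) : |v.2.1| ≤ en3 v := by
  rw [← Real.sqrt_sq_eq_abs]
  exact Real.sqrt_le_sqrt (by nlinarith [sq_nonneg v.1, sq_nonneg v.2.2])
lemma abs_22_le_en3 (v : ℝ × ℝ × ℝ) : |v.2.2| ≤ en3 v := by
  rw [← Real.sqrt_sq_eq_abs]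
  exact Real.sqrt_le_sqrt (by nlinarith [sq_nonneg v.1, sq_nonneg v.2.1])

/-- Bound on `x₂ - g(x₁)` in terms of a norm dominating both coordinates. -/
lemma aux_residual_bound (g : ℝ → ℝ) (Lr : ℝ) (hL : 0 ≤ Lr)
    (hgr : ∀ a b : ℝ, |g a - g b| ≤ Lr * |a - b|)
    (u1 u2 n : ℝ) (h1 : |u1| ≤ n) (h2 : |u2| ≤ n) :
    |u2 - g u1| ≤ (|g 0| + 1 + Lr) * (1 + n) := by
  have e : u2 - g u1 = u2 - (g u1 - g 0) - g 0 := by ring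
  have t : |u2 - g u1| ≤ |u2| + |g u1 - g 0| + |g 0| := by
    rw [e]
    calc |u2 - (g u1 - g 0) - g 0| ≤ |u2 - (g u1 - g 0)| + |g 0| := abs_sub _ _
      _ ≤ |u2| + |g u1 - g 0| + |g 0| := by linarith [abs_sub u2 (g u1 - g 0)]
  have hg0 : |g u1 - g 0| ≤ Lr * |u1| := by simpa using hgr u1 0
  have habs : 0 ≤ |g 0| := abs_nonneg _
  have hn : 0 ≤ n := (abs_nonneg u1).trans h1
  nlinarith [mul_le_mul_of_nonneg_left h1 hL]

/-- Bound on the difference of residuals. -/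
lemma aux_residual_diff (g : ℝ → ℝ) (Lr : ℝ) (hL : 0 ≤ Lr)
    (hgr : ∀ a b : ℝ, |g a - g b| ≤ Lr * |a - b|)
    (x1 x2 y1 y2 d : ℝ) (h1 : |x1 - y1| ≤ d) (h2 : |x2 - y2| ≤ d) :
    |(x2 - g x1) - (y2 - g y1)| ≤ (1 + Lr) * d := by
  have e : (x2 - g x1) - (y2 - g y1) = (x2 - y2) - (g x1 - g y1) := by ring
  rw [e]
  calc |(x2 - y2) - (g x1 - g y1)| ≤ |x2 - y2| + |g x1 - g y1| := abs_sub _ _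
    _ ≤ d + Lr * d := by
        have := hgr x1 y1
        nlinarith [mul_le_mul_of_nonneg_left h1 hL]
    _ = (1 + Lr) * d := by ring

set_option maxHeartbeats 1000000 in
/-- The uniform slice PL(2) bound. -/
lemma slice_PL2 (g : ℝ → ℝ) (Lr : ℝ) (hL : 0 ≤ Lr)
    (hgr : ∀ a b : ℝ, |g a - g b| ≤ Lr * |a - b|) (z : ℝ) :
    PL2ConstLE (2 * (|z| + 1) * (|g 0| + 1 + Lr) * (1 + Lr))
      (fun x : ℝ × ℝ => z * (x.2 - g x.1) ^ 2) := by
  intro x y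
  set M : ℝ := |g 0| + 1 + Lr with hMdef
  have hM : 1 ≤ M := by have := abs_nonneg (g 0); simp only [hMdef]; linarith
  set a := en2 x with hadef
  set b := en2 y with hbdef
  set d := en2 (x.1 - y.1, x.2 - y.2) with hddef
  have ha : 0 ≤ a := en2_nonneg x
  have hb : 0 ≤ b := en2_nonneg y
  have hd : 0 ≤ d := en2_nonneg _
  have hhx : |x.2 - g x.1| ≤ M * (1 + a) :=
    aux_residual_bound g Lr hL hgr x.1 x.2 a (abs_fst_le_en2 x) (abs_snd_le_en2 x)
  have hhy : |y.2 - g y.1| ≤ M * (1 + b) :=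
    aux_residual_bound g Lr hL hgr y.1 y.2 b (abs_fst_le_en2 y) (abs_snd_le_en2 y)
  have hsum : |(x.2 - g x.1) + (y.2 - g y.1)| ≤ M * (2 + a + b) := by
    calc |(x.2 - g x.1) + (y.2 - g y.1)| ≤ |x.2 - g x.1| + |y.2 - g y.1| := abs_add_le _ _
      _ ≤ M * (1 + a) + M * (1 + b) := by linarith
      _ = M * (2 + a + b) := by ring
  have hdiff : |(x.2 - g x.1) - (y.2 - g y.1)| ≤ (1 + Lr) * d :=
    aux_residual_diff g Lr hL hgr x.1 x.2 y.1 y.2 d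
      (abs_fst_le_en2 (x.1 - y.1, x.2 - y.2)) (abs_snd_le_en2 (x.1 - y.1, x.2 - y.2))
  have key : z * (x.2 - g x.1) ^ 2 - z * (y.2 - g y.1) ^ 2 =
      z * (((x.2 - g x.1) + (y.2 - g y.1)) * ((x.2 - g x.1) - (y.2 - g y.1))) := by ring
  calc |z * (x.2 - g x.1) ^ 2 - z * (y.2 - g y.1) ^ 2|
      = |z| * (|(x.2 - g x.1) + (y.2 - g y.1)| * |(x.2 - g x.1) - (y.2 - g y.1)|) := by
        rw [key, abs_mul, abs_mul]
    _ ≤ (|z| + 1) * ((M * (2 + a + b)) * ((1 + Lr) * d)) := by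
        apply mul_le_mul (by linarith [abs_nonneg z])
        · exact mul_le_mul hsum hdiff (abs_nonneg _) (by nlinarith)
        · exact mul_nonneg (abs_nonneg _) (abs_nonneg _)
        · linarith [abs_nonneg z]
    _ = (2 + a + b) * ((|z| + 1) * M * (1 + Lr) * d) := by ring
    _ ≤ (2 * (1 + a + b)) * ((|z| + 1) * M * (1 + Lr) * d) := by
        apply mul_le_mul_of_nonneg_right (by linarith)
        apply mul_nonneg; apply mul_nonneg; apply mul_nonneg
        all_goals linarith [abs_nonneg z]
    _ = 2 * (|z| + 1) * M * (1 + Lr) * (1 + a + b) * d := by ring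

set_option maxHeartbeats 1000000 in
/-- The PL(3) bound on the full function. -/
lemma quad_PL3 (g : ℝ → ℝ) (Lr : ℝ) (hL : 0 ≤ Lr)
    (hgr : ∀ a b : ℝ, |g a - g b| ≤ Lr * |a - b|) (x y : ℝ × ℝ × ℝ) :
    |x.2.2 * (x.2.1 - g x.1) ^ 2 - y.2.2 * (y.2.1 - g y.1) ^ 2| ≤
      (3 * (|g 0| + 1 + Lr) * (1 + Lr) + 2 * (|g 0| + 1 + Lr) ^ 2) *
        (1 + en3 x ^ 2 + en3 y ^ 2) * en3 (x.1 - y.1, x.2.1 - y.2.1, x.2.2 - y.2.2) := by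
  set M : ℝ := |g 0| + 1 + Lr with hMdef
  have hM : 1 ≤ M := by have := abs_nonneg (g 0); simp only [hMdef]; linarith
  set A := en3 x with hAdef
  set B := en3 y with hBdef
  set D := en3 (x.1 - y.1, x.2.1 - y.2.1, x.2.2 - y.2.2) with hDdef
  have hA : 0 ≤ A := en3_nonneg x
  have hB : 0 ≤ B := en3_nonneg y
  have hD : 0 ≤ D := en3_nonneg _
  have hx3 : |x.2.2| ≤ A := abs_22_le_en3 x
  have hD3 : |x.2.2 - y.2.2| ≤ D := abs_22_le_en3 (x.1 - y.1, x.2.1 - y.2.1, x.2.2 - y.2.2)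
  have hhx : |x.2.1 - g x.1| ≤ M * (1 + A) :=
    aux_residual_bound g Lr hL hgr x.1 x.2.1 A (abs_1_le_en3 x) (abs_21_le_en3 x)
  have hhy : |y.2.1 - g y.1| ≤ M * (1 + B) :=
    aux_residual_bound g Lr hL hgr y.1 y.2.1 B (abs_1_le_en3 y) (abs_21_le_en3 y)
  have hsum : |(x.2.1 - g x.1) + (y.2.1 - g y.1)| ≤ M * (2 + A + B) := by
    calc |(x.2.1 - g x.1) + (y.2.1 - g y.1)| ≤ |x.2.1 - g x.1| + |y.2.1 - g y.1| :=
          abs_add_le _ _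
      _ ≤ M * (1 + A) + M * (1 + B) := by linarith
      _ = M * (2 + A + B) := by ring
  have hdiff : |(x.2.1 - g x.1) - (y.2.1 - g y.1)| ≤ (1 + Lr) * D :=
    aux_residual_diff g Lr hL hgr x.1 x.2.1 y.1 y.2.1 D
      (abs_1_le_en3 (x.1 - y.1, x.2.1 - y.2.1, x.2.2 - y.2.2))
      (abs_21_le_en3 (x.1 - y.1, x.2.1 - y.2.1, x.2.2 - y.2.2))
  have split : x.2.2 * (x.2.1 - g x.1) ^ 2 - y.2.2 * (y.2.1 - g y.1) ^ 2 =
      x.2.2 * (((x.2.1 - g x.1) + (y.2.1 - g y.1)) * ((x.2.1 - g x.1) - (y.2.1 - g y.1)))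
        + (x.2.2 - y.2.2) * (y.2.1 - g y.1) ^ 2 := by ring
  have tri : |x.2.2 * (x.2.1 - g x.1) ^ 2 - y.2.2 * (y.2.1 - g y.1) ^ 2| ≤
      |x.2.2| * (|(x.2.1 - g x.1) + (y.2.1 - g y.1)| * |(x.2.1 - g x.1) - (y.2.1 - g y.1)|)
        + |x.2.2 - y.2.2| * (y.2.1 - g y.1) ^ 2 := by
    rw [split]
    refine (abs_add_le _ _).trans ?_
    rw [abs_mul, abs_mul, abs_mul]
    rw [abs_of_nonneg (sq_nonneg (y.2.1 - g y.1))]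
  have t1 : |x.2.2| * (|(x.2.1 - g x.1) + (y.2.1 - g y.1)| *
      |(x.2.1 - g x.1) - (y.2.1 - g y.1)|) ≤ A * ((M * (2 + A + B)) * ((1 + Lr) * D)) := by
    apply mul_le_mul hx3
    · exact mul_le_mul hsum hdiff (abs_nonneg _) (by nlinarith)
    · exact mul_nonneg (abs_nonneg _) (abs_nonneg _)
    · exact hA
  have t2 : |x.2.2 - y.2.2| * (y.2.1 - g y.1) ^ 2 ≤ D * (M * (1 + B)) ^ 2 := by
    apply mul_le_mul hD3 _ (sq_nonneg _) hD
    calc (y.2.1 - g y.1) ^ 2 = |y.2.1 - g y.1| ^ 2 := (sq_abs _).symm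
      _ ≤ (M * (1 + B)) ^ 2 := by
          exact pow_le_pow_left₀ (abs_nonneg _) hhy 2
  have hP : 0 ≤ M * (1 + Lr) * D := by
    apply mul_nonneg; apply mul_nonneg; all_goals linarith
  have hQ : 0 ≤ M ^ 2 * D := by positivity
  have k1 : A * (2 + A + B) ≤ 3 * (1 + A ^ 2 + B ^ 2) := by
    nlinarith [sq_nonneg (1 - A), sq_nonneg (A - B), sq_nonneg A, sq_nonneg B]
  have k2 : (1 + B) ^ 2 ≤ 2 * (1 + A ^ 2 + B ^ 2) := by
    nlinarith [sq_nonneg (1 - B), sq_nonneg A]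
  have h1 : A * ((M * (2 + A + B)) * ((1 + Lr) * D)) ≤
      3 * M * (1 + Lr) * (1 + A ^ 2 + B ^ 2) * D := by
    calc A * ((M * (2 + A + B)) * ((1 + Lr) * D))
        = (A * (2 + A + B)) * (M * (1 + Lr) * D) := by ring
      _ ≤ (3 * (1 + A ^ 2 + B ^ 2)) * (M * (1 + Lr) * D) :=
          mul_le_mul_of_nonneg_right k1 hP
      _ = 3 * M * (1 + Lr) * (1 + A ^ 2 + B ^ 2) * D := by ring
  have h2 : D * (M * (1 + B)) ^ 2 ≤ 2 * M ^ 2 * (1 + A ^ 2 + B ^ 2) * D := by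
    calc D * (M * (1 + B)) ^ 2 = ((1 + B) ^ 2) * (M ^ 2 * D) := by ring
      _ ≤ (2 * (1 + A ^ 2 + B ^ 2)) * (M ^ 2 * D) := mul_le_mul_of_nonneg_right k2 hQ
      _ = 2 * M ^ 2 * (1 + A ^ 2 + B ^ 2) * D := by ring
  calc |x.2.2 * (x.2.1 - g x.1) ^ 2 - y.2.2 * (y.2.1 - g y.1) ^ 2|
      ≤ A * ((M * (2 + A + B)) * ((1 + Lr) * D)) + D * (M * (1 + B)) ^ 2 := by
        linarith [tri, t1, t2]
    _ ≤ 3 * M * (1 + Lr) * (1 + A ^ 2 + B ^ 2) * D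
        + 2 * M ^ 2 * (1 + A ^ 2 + B ^ 2) * D := by linarith
    _ = (3 * M * (1 + Lr) + 2 * M ^ 2) * (1 + A ^ 2 + B ^ 2) * D := by ring

theorem quadratic_of_lipschitz_is_PL3_and_in_F
    (g : ℝ → ℝ) (hg : ∃ L : NNReal, LipschitzWith L g) :
    -- f(x₁,x₂,x₃) = x₃(x₂ − g(x₁))²
    PL3 3 (fun v : ℝ × ℝ × ℝ => v.2.2 * (v.2.1 - g v.1) ^ 2) ∧
    -- restricted to a bounded third coordinate, f belongs to the class F
    (∀ Z : Set ℝ, Bornology.IsBounded Z →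
      ∃ C > 0, ∀ z ∈ Z,
        PL2ConstLE C fun x : ℝ × ℝ => z * (x.2 - g x.1) ^ 2) ∧
    -- in particular, with Z = [Σmin, Σmax], every member of F_L belongs to F
    (∀ Smin Smax : ℝ,
      MemClassF Smin Smax fun v : ℝ × ℝ × ℝ => v.2.2 * (v.2.1 - g v.1) ^ 2) := by
  obtain ⟨Ln, hLn⟩ := hg
  set Lr : ℝ := (Ln : ℝ) with hLrdef
  have hL : 0 ≤ Lr := Ln.2
  have hgr : ∀ a b : ℝ, |g a - g b| ≤ Lr * |a - b| := fun a b => by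
    have := hLn.dist_le_mul a b
    simpa [Real.dist_eq] using this
  have hM : (0:ℝ) < |g 0| + 1 + Lr := by have := abs_nonneg (g 0); linarith
  have hLr1 : (0:ℝ) < 1 + Lr := by linarith
  have pl3 : PL3 3 (fun v : ℝ × ℝ × ℝ => v.2.2 * (v.2.1 - g v.1) ^ 2) := by
    refine ⟨3 * (|g 0| + 1 + Lr) * (1 + Lr) + 2 * (|g 0| + 1 + Lr) ^ 2, ?_, ?_⟩
    · have h3 : (0:ℝ) < 3 * (|g 0| + 1 + Lr) * (1 + Lr) :=
        mul_pos (mul_pos (by norm_num) hM) hLr1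
      nlinarith [sq_nonneg (|g 0| + 1 + Lr)]
    · intro x y
      exact quad_PL3 g Lr hL hgr x y
  have bdd : ∀ Z : Set ℝ, Bornology.IsBounded Z →
      ∃ C > 0, ∀ z ∈ Z, PL2ConstLE C fun x : ℝ × ℝ => z * (x.2 - g x.1) ^ 2 := by
    intro Z hZ
    obtain ⟨r, hr⟩ := hZ.subset_closedBall 0
    have c1 : (0:ℝ) < |r| + 1 := by positivity
    refine ⟨2 * (|r| + 1) * (|g 0| + 1 + Lr) * (1 + Lr),
      mul_pos (mul_pos (mul_pos two_pos c1) hM) hLr1, ?_⟩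
    intro z hz
    have hzr : |z| ≤ |r| := by
      have := hr hz
      simp only [Metric.mem_closedBall, Real.dist_eq, sub_zero] at this
      exact this.trans (le_abs_self r)
    intro x y
    refine (slice_PL2 g Lr hL hgr z x y).trans ?_
    apply mul_le_mul_of_nonneg_right _ (en2_nonneg _)
    apply mul_le_mul_of_nonneg_right _ (by linarith [en2_nonneg x, en2_nonneg y])
    have hfac : 0 ≤ 2 * (|g 0| + 1 + Lr) * (1 + Lr) := by positivity
    calc 2 * (|z| + 1) * (|g 0| + 1 + Lr) * (1 + Lr)
        = (|z| + 1) * (2 * (|g 0| + 1 + Lr) * (1 + Lr)) := by ring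
      _ ≤ (|r| + 1) * (2 * (|g 0| + 1 + Lr) * (1 + Lr)) :=
          mul_le_mul_of_nonneg_right (by linarith) hfac
      _ = 2 * (|r| + 1) * (|g 0| + 1 + Lr) * (1 + Lr) := by ring
  refine ⟨pl3, bdd, ?_⟩
  intro Smin Smax
  refine ⟨pl3, ?_⟩
  obtain ⟨C, hC, hCz⟩ := bdd (Set.Icc Smin Smax) (Metric.isBounded_Icc Smin Smax)
  exact ⟨C, hC, fun z hz => hCz z hz⟩
end
end
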